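/- Define M̃⁽²⁾(r) = (1/9)(1 − e(−3r) + e(−6r))(1 − e(−2r) + e(−4r)) where e(t) = exp(2πit). Then for every real s, the sum over j = 0,1,2,3 of |M̃⁽²⁾(s/4 + j/4)|² equals (4/81)(9 + 2cos(2πs) − 4cos(4πs)). -/

import Mathlib

/-- `e(t) = exp(2πit)`. -/
noncomputable def e (t : ℝ) : ℂ := Complex.exp (2 * Real.pi * Complex.I * t)

/-- `M̃⁽²⁾(r) = (1/9)(1 − e(−3r) + e(−6r))(1 − e(−2r) + e(−4r))`. -/
noncomputable def Mtilde2 (r : ℝ) : ℂ :=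
  (1/9) * (1 - e (-3*r) + e (-6*r)) * (1 - e (-2*r) + e (-4*r))

lemma negI_eq : -Complex.I = Complex.exp (-(Real.pi/2 : ℝ) * Complex.I) := by
  rw [Complex.exp_mul_I]
  push_cast
  rw [Complex.cos_neg, Complex.sin_neg, Complex.cos_pi_div_two, Complex.sin_pi_div_two]
  ring

lemma e_helper (s t : ℝ) (j k : ℕ) (ht : t = -(k:ℝ) * (s/4 + (j:ℝ)/4)) :
    e t = (Complex.exp (Real.pi * Complex.I * s / 2))⁻¹ ^ k * ((-Complex.I) ^ j) ^ k := by
  subst ht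
  rw [negI_eq, ← Complex.exp_neg, ← Complex.exp_nat_mul, ← Complex.exp_nat_mul,
    ← Complex.exp_nat_mul, ← Complex.exp_add]
  unfold e
  congr 1
  push_cast
  ring

lemma Mt_eq (s : ℝ) (j : ℕ) :
    Mtilde2 (s/4 + (j:ℝ)/4) =
      (1/9) * (1 - (Complex.exp (Real.pi * Complex.I * s / 2))⁻¹ ^ 3 * ((-Complex.I) ^ j) ^ 3
            + (Complex.exp (Real.pi * Complex.I * s / 2))⁻¹ ^ 6 * ((-Complex.I) ^ j) ^ 6)
        * (1 - (Complex.exp (Real.pi * Complex.I * s / 2))⁻¹ ^ 2 * ((-Complex.I) ^ j) ^ 2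
            + (Complex.exp (Real.pi * Complex.I * s / 2))⁻¹ ^ 4 * ((-Complex.I) ^ j) ^ 4) := by
  unfold Mtilde2
  rw [e_helper s (-3*(s/4 + (j:ℝ)/4)) j 3 (by push_cast; ring),
      e_helper s (-6*(s/4 + (j:ℝ)/4)) j 6 (by push_cast; ring),
      e_helper s (-2*(s/4 + (j:ℝ)/4)) j 2 (by push_cast; ring),
      e_helper s (-4*(s/4 + (j:ℝ)/4)) j 4 (by push_cast; ring)]

lemma castabs (z : ℂ) : ((‖z‖ : ℂ))^2 = z * (starRingEnd ℂ) z := by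
  rw [Complex.mul_conj']

lemma conjw (s : ℝ) : (starRingEnd ℂ) (Complex.exp (Real.pi * Complex.I * s / 2))
    = (Complex.exp (Real.pi * Complex.I * s / 2))⁻¹ := by
  rw [← Complex.exp_conj, ← Complex.exp_neg]
  congr 1
  simp only [map_div₀, map_mul, Complex.conj_I, Complex.conj_ofReal, map_ofNat]
  ring

lemma hcos (s : ℝ) (z : ℂ) (n : ℕ)
    (h : z * Complex.I = (n:ℕ) * (Real.pi * Complex.I * s / 2)) :
    Complex.cos z = ((Complex.exp (Real.pi * Complex.I * s / 2))^n
      + ((Complex.exp (Real.pi * Complex.I * s / 2))⁻¹)^n)/2 := by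
  have h2 : -z * Complex.I = (n:ℕ) * (-(Real.pi * Complex.I * s / 2)) := by
    rw [neg_mul, h]; ring
  rw [Complex.cos, h, h2, Complex.exp_nat_mul, Complex.exp_nat_mul, Complex.exp_neg, inv_pow]

set_option maxHeartbeats 2000000 in
theorem stmt14 (s : ℝ) :
    ∑ j ∈ Finset.range 4, ‖Mtilde2 (s/4 + (j:ℝ)/4)‖^2 =
      (4/81) * (9 + 2 * Real.cos (2 * Real.pi * s) - 4 * Real.cos (4 * Real.pi * s)) := by
  have hw0 : Complex.exp (Real.pi * Complex.I * s / 2) ≠ 0 := Complex.exp_ne_zero _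
  have i1 : Complex.I ^ 1 = Complex.I := pow_one _
  have i2 : Complex.I ^ 2 = -1 := Complex.I_sq
  have i3 : Complex.I ^ 3 = (-Complex.I) := by rw [pow_succ, i2]; simp [Complex.I_mul_I]
  have i4 : Complex.I ^ 4 = (1:ℂ) := by rw [pow_succ, i3]; simp [Complex.I_mul_I]
  have i5 : Complex.I ^ 5 = Complex.I := by rw [pow_succ, i4]; simp [Complex.I_mul_I]
  have i6 : Complex.I ^ 6 = (-1:ℂ) := by rw [pow_succ, i5]; simp [Complex.I_mul_I]
  have i7 : Complex.I ^ 7 = (-Complex.I) := by rw [pow_succ, i6]; simp [Complex.I_mul_I]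
  have i8 : Complex.I ^ 8 = (1:ℂ) := by rw [pow_succ, i7]; simp [Complex.I_mul_I]
  have i9 : Complex.I ^ 9 = Complex.I := by rw [pow_succ, i8]; simp [Complex.I_mul_I]
  have i10 : Complex.I ^ 10 = (-1:ℂ) := by rw [pow_succ, i9]; simp [Complex.I_mul_I]
  have i11 : Complex.I ^ 11 = (-Complex.I) := by rw [pow_succ, i10]; simp [Complex.I_mul_I]
  have i12 : Complex.I ^ 12 = (1:ℂ) := by rw [pow_succ, i11]; simp [Complex.I_mul_I]
  have i13 : Complex.I ^ 13 = Complex.I := by rw [pow_succ, i12]; simp [Complex.I_mul_I]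
  have i14 : Complex.I ^ 14 = (-1:ℂ) := by rw [pow_succ, i13]; simp [Complex.I_mul_I]
  have i15 : Complex.I ^ 15 = (-Complex.I) := by rw [pow_succ, i14]; simp [Complex.I_mul_I]
  have i16 : Complex.I ^ 16 = (1:ℂ) := by rw [pow_succ, i15]; simp [Complex.I_mul_I]
  have i17 : Complex.I ^ 17 = Complex.I := by rw [pow_succ, i16]; simp [Complex.I_mul_I]
  have i18 : Complex.I ^ 18 = (-1:ℂ) := by rw [pow_succ, i17]; simp [Complex.I_mul_I]
  have i19 : Complex.I ^ 19 = (-Complex.I) := by rw [pow_succ, i18]; simp [Complex.I_mul_I]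
  have i20 : Complex.I ^ 20 = (1:ℂ) := by rw [pow_succ, i19]; simp [Complex.I_mul_I]
  have i21 : Complex.I ^ 21 = Complex.I := by rw [pow_succ, i20]; simp [Complex.I_mul_I]
  have i22 : Complex.I ^ 22 = (-1:ℂ) := by rw [pow_succ, i21]; simp [Complex.I_mul_I]
  have i23 : Complex.I ^ 23 = (-Complex.I) := by rw [pow_succ, i22]; simp [Complex.I_mul_I]
  have i24 : Complex.I ^ 24 = (1:ℂ) := by rw [pow_succ, i23]; simp [Complex.I_mul_I]
  have i25 : Complex.I ^ 25 = Complex.I := by rw [pow_succ, i24]; simp [Complex.I_mul_I]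
  have i26 : Complex.I ^ 26 = (-1:ℂ) := by rw [pow_succ, i25]; simp [Complex.I_mul_I]
  have i27 : Complex.I ^ 27 = (-Complex.I) := by rw [pow_succ, i26]; simp [Complex.I_mul_I]
  have i28 : Complex.I ^ 28 = (1:ℂ) := by rw [pow_succ, i27]; simp [Complex.I_mul_I]
  have i29 : Complex.I ^ 29 = Complex.I := by rw [pow_succ, i28]; simp [Complex.I_mul_I]
  have i30 : Complex.I ^ 30 = (-1:ℂ) := by rw [pow_succ, i29]; simp [Complex.I_mul_I]
  have i31 : Complex.I ^ 31 = (-Complex.I) := by rw [pow_succ, i30]; simp [Complex.I_mul_I]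
  have i32 : Complex.I ^ 32 = (1:ℂ) := by rw [pow_succ, i31]; simp [Complex.I_mul_I]
  have i33 : Complex.I ^ 33 = Complex.I := by rw [pow_succ, i32]; simp [Complex.I_mul_I]
  have i34 : Complex.I ^ 34 = (-1:ℂ) := by rw [pow_succ, i33]; simp [Complex.I_mul_I]
  have i35 : Complex.I ^ 35 = (-Complex.I) := by rw [pow_succ, i34]; simp [Complex.I_mul_I]
  have i36 : Complex.I ^ 36 = (1:ℂ) := by rw [pow_succ, i35]; simp [Complex.I_mul_I]
  have i37 : Complex.I ^ 37 = Complex.I := by rw [pow_succ, i36]; simp [Complex.I_mul_I]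
  have i38 : Complex.I ^ 38 = (-1:ℂ) := by rw [pow_succ, i37]; simp [Complex.I_mul_I]
  have i39 : Complex.I ^ 39 = (-Complex.I) := by rw [pow_succ, i38]; simp [Complex.I_mul_I]
  have i40 : Complex.I ^ 40 = (1:ℂ) := by rw [pow_succ, i39]; simp [Complex.I_mul_I]
  have key : ∀ j : ℕ, ((‖Mtilde2 (s/4 + (j:ℝ)/4)‖ : ℂ))^2 =
      (1/81) * (1 - (Complex.exp (Real.pi * Complex.I * s / 2))⁻¹ ^ 3 * ((-Complex.I) ^ j) ^ 3
            + (Complex.exp (Real.pi * Complex.I * s / 2))⁻¹ ^ 6 * ((-Complex.I) ^ j) ^ 6)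
        * (1 - (Complex.exp (Real.pi * Complex.I * s / 2))⁻¹ ^ 2 * ((-Complex.I) ^ j) ^ 2
            + (Complex.exp (Real.pi * Complex.I * s / 2))⁻¹ ^ 4 * ((-Complex.I) ^ j) ^ 4)
        * (1 - (Complex.exp (Real.pi * Complex.I * s / 2)) ^ 3 * (Complex.I ^ j) ^ 3
            + (Complex.exp (Real.pi * Complex.I * s / 2)) ^ 6 * (Complex.I ^ j) ^ 6)
        * (1 - (Complex.exp (Real.pi * Complex.I * s / 2)) ^ 2 * (Complex.I ^ j) ^ 2
            + (Complex.exp (Real.pi * Complex.I * s / 2)) ^ 4 * (Complex.I ^ j) ^ 4) := by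
    intro j
    rw [castabs, Mt_eq]
    simp only [map_mul, map_sub, map_add, map_one, map_pow, map_inv₀, map_div₀, map_ofNat,
      Complex.conj_I, conjw, inv_inv, map_neg, neg_neg, map_one]
    ring
  rw [← Complex.ofReal_inj]
  push_cast
  simp only [key]
  rw [Finset.sum_range_succ, Finset.sum_range_succ, Finset.sum_range_succ, Finset.sum_range_one,
    hcos s (2 * (Real.pi:ℂ) * (s:ℂ)) 4 (by push_cast; ring),
    hcos s (4 * (Real.pi:ℂ) * (s:ℂ)) 8 (by push_cast; ring)]
  norm_num [i2, i3, i4]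
  field_simp
  ring_nf
  simp only [i2,i3,i4,i5,i6,i7,i8,i9,i10,i11,i12,i13,i14,i15,i16,i17,i18,i19,i20,i21,i22,i23,i24,
    i25,i26,i27,i28,i29,i30,i31,i32,i33,i34,i35,i36,i37,i38,i39,i40]
  ring
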